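/- A finite system S_q (with all states initial) is detectable if and only if in the knowledge-NFA A produced by the pairwise-subset construction (Algorithm 1), every state reachable from some cycle is a singleton subset of X_q. -/

import Mathlib

structure Sys (X U Y : Type) where
  init : Set X
  tr : X → U → X → Prop
  H : X → Y

namespace Sys

variable {X U Y : Type}

/-- the set of `u`-successors of `x` -/
def Post (S : Sys X U Y) (x : X) (u : U) : Set X := {x' | S.tr x u x'}

/-- inputs admissible at state `x` -/
def adm (S : Sys X U Y) (x : X) : Set U := {u | (S.Post x u).Nonempty}

/-- inputs admissible at output `y` (admissible at every state with that output) -/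
def admOut (S : Sys X U Y) (y : Y) : Set U := {u | ∀ x, S.H x = y → u ∈ S.adm x}

/-- `u`-successor observations of output `y` -/
def obsPost (S : Sys X U Y) (y : Y) (u : U) : Set Y :=
  S.H '' (⋃ x ∈ {x | S.H x = y}, S.Post x u)

end Sys

/-- Feedback refinement relation from `S₁` to `S₂`. -/
def IsFRR {X₁ X₂ U Y₁ Y₂ : Type} (S₁ : Sys X₁ U Y₁) (S₂ : Sys X₂ U Y₂)
    (Q : Set (X₁ × X₂)) : Prop :=
  (∀ x₁, ∃ x₂, (x₁, x₂) ∈ Q) ∧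
  (∀ p ∈ Q, S₂.adm p.2 ⊆ S₁.adm p.1) ∧
  (∀ p ∈ Q, ∀ u ∈ S₂.adm p.2, ∀ x₁' ∈ S₁.Post p.1 u, ∀ x₂',
      (x₁', x₂') ∈ Q → x₂' ∈ S₂.Post p.2 u) ∧
  (∀ p ∈ Q, p.1 ∈ S₁.init → p.2 ∈ S₂.init)

/-- Output-feedback refinement relation `Z` over underlying FRR `Q`. -/
def IsOFRR {X₁ X₂ U Y₁ Y₂ : Type} (S₁ : Sys X₁ U Y₁) (S₂ : Sys X₂ U Y₂)
    (Q : Set (X₁ × X₂)) (Z : Set (Y₁ × Y₂)) : Prop :=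
  IsFRR S₁ S₂ Q ∧
  (∀ p ∈ Z, S₂.admOut p.2 ⊆ S₁.admOut p.1) ∧
  (∀ p ∈ Q, (S₁.H p.1, S₂.H p.2) ∈ Z) ∧
  (∀ p ∈ Z, ∃ q ∈ Q, S₁.H q.1 = p.1 ∧ S₂.H q.2 = p.2)

/-- One observation step: successors of `s` under input `u` whose output is `y`. -/
def obsStep {X U Y : Type} (S : Sys X U Y) (s : Set X) (u : U) (y : Y) : Set X :=
  {x' | (∃ x ∈ s, S.tr x u x') ∧ S.H x' = y}

/-- `Post_α^β(X)`: states consistent with initial observation `y0` and the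
input/observation sequence `l`. -/
def ReachIO {X U Y : Type} (S : Sys X U Y) (y0 : Y) (l : List (U × Y)) : Set X :=
  l.foldl (fun s p => obsStep S s p.1 p.2) {x | S.H x = y0}

/-- Detectability: sufficiently long input/observation histories determine the
current state uniquely. -/
def Detectable {X U Y : Type} (S : Sys X U Y) : Prop :=
  ∃ N : ℕ, ∀ (y0 : Y) (l : List (U × Y)), N ≤ l.length →
    (ReachIO S y0 l).Subsingleton

/-- Transition relation of the knowledge NFA `A` from the pairwise-subset
construction (Algorithm 1): states are `⋄` (= `none`) together with nonempty
subsets of `X` of cardinality at most 2; labels are pairs `(Option U, Y)` where the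
first component `none` stands for the dummy input `φ`. -/
def Adelta {X U Y : Type} (S : Sys X U Y)
    (a : Option (Set X)) (l : Option U × Y) (b : Option (Set X)) : Prop :=
  match a, l, b with
  | none, (none, y), some z =>
      z.Nonempty ∧ (∃ c d, z = {c, d}) ∧ z ⊆ {x | S.H x = y}
  | some q, (some u, y), some z =>
      z.Nonempty ∧ (∃ c d, z = {c, d}) ∧ z ⊆ obsStep S q u y
  | _, _, _ => False

/-- One-step reachability in the NFA `A` (under some label). -/
def AR {X U Y : Type} (S : Sys X U Y) (a b : Option (Set X)) : Prop :=
  ∃ l, Adelta S a l b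

/-- Limit set of `A`: states reachable (from the initial state `⋄`) through some
cycle. -/
def LP {X U Y : Type} (S : Sys X U Y) : Set (Option (Set X)) :=
  {q | ∃ c, Relation.ReflTransGen (AR S) none c ∧
    Relation.TransGen (AR S) c c ∧ Relation.ReflTransGen (AR S) c q}

/-- The extension of `Adelta` to label sequences. -/
def AdeltaStar {X U Y : Type} (S : Sys X U Y) :
    Option (Set X) → List (Option U × Y) → Option (Set X) → Prop
  | a, [], b => a = b
  | a, l :: ls, b => ∃ c, Adelta S a l c ∧ AdeltaStar S c ls b

/-- Every pair of input sequence of length `t` and matching observation sequence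
drives `⋄` into the limit set. -/
def transientOK {X U Y : Type} (S : Sys X U Y) (t : ℕ) : Prop :=
  ∀ (y0 : Y) (l : List (U × Y)) (q : Option (Set X)), l.length = t →
    AdeltaStar S none ((none, y0) :: l.map (fun p => (some p.1, p.2))) q →
    q ∈ LP S

/-- The transient period `T_t` of the knowledge NFA of `S`. -/
noncomputable def Tt {X U Y : Type} (S : Sys X U Y) : ℕ := sInf {t | transientOK S t}

section DetectAux

variable {X U Y : Type}

/-- Fold of observation steps starting from an arbitrary set. -/
def foldSteps (S : Sys X U Y) (s : Set X) (l : List (U × Y)) : Set X :=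
  l.foldl (fun s p => obsStep S s p.1 p.2) s

lemma obsStep_mono (S : Sys X U Y) {s t : Set X} (h : s ⊆ t) (u : U) (y : Y) :
    obsStep S s u y ⊆ obsStep S t u y := by
  rintro x ⟨⟨x0, hx0, htr⟩, hH⟩
  exact ⟨⟨x0, h hx0, htr⟩, hH⟩

lemma foldSteps_mono (S : Sys X U Y) {s t : Set X} (h : s ⊆ t) :
    ∀ l, foldSteps S s l ⊆ foldSteps S t l := by
  intro l
  induction l generalizing s t with
  | nil => exact h
  | cons p ls ih => exact ih (obsStep_mono S h p.1 p.2)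

lemma foldSteps_append (S : Sys X U Y) (s : Set X) (l1 l2 : List (U × Y)) :
    foldSteps S s (l1 ++ l2) = foldSteps S (foldSteps S s l1) l2 :=
  List.foldl_append

lemma reachIO_eq (S : Sys X U Y) (y0 : Y) (l : List (U × Y)) :
    ReachIO S y0 l = foldSteps S {x | S.H x = y0} l := rfl

lemma reachIO_append (S : Sys X U Y) (y0 : Y) (l : List (U × Y)) (p : U × Y) :
    ReachIO S y0 (l ++ [p]) = obsStep S (ReachIO S y0 l) p.1 p.2 := by
  rw [reachIO_eq, foldSteps_append, reachIO_eq]; rfl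

/-- Shape of targets of `Adelta`. -/
lemma adelta_target {S : Sys X U Y} {a b : Option (Set X)} {l : Option U × Y}
    (h : Adelta S a l b) :
    ∃ z, b = some z ∧ z.Nonempty ∧ (∃ c d, z = ({c, d} : Set X)) := by
  rcases a with _ | q <;> rcases b with _ | z <;> rcases l with ⟨_ | u, y⟩ <;>
    simp only [Adelta] at h <;> try exact h.elim
  · exact ⟨z, rfl, h.1, h.2.1⟩
  · exact ⟨z, rfl, h.1, h.2.1⟩

lemma ar_target {S : Sys X U Y} {a b : Option (Set X)} (h : AR S a b) :
    ∃ z, b = some z ∧ z.Nonempty ∧ (∃ c d, z = ({c, d} : Set X)) := by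
  obtain ⟨l, h⟩ := h; exact adelta_target h

lemma ar_from_some {S : Sys X U Y} {s : Set X} {b : Option (Set X)}
    (h : AR S (some s) b) : ∃ z u y, b = some z ∧ z ⊆ obsStep S s u y := by
  obtain ⟨⟨ou, y⟩, h⟩ := h
  rcases b with _ | z <;> rcases ou with _ | u <;> simp only [Adelta] at h <;>
    try exact h.elim
  exact ⟨z, u, y, rfl, h.2.2⟩

lemma ar_from_none {S : Sys X U Y} {b : Option (Set X)}
    (h : AR S none b) : ∃ z y, b = some z ∧ z ⊆ {x | S.H x = y} := by
  obtain ⟨⟨ou, y⟩, h⟩ := h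
  rcases b with _ | z <;> rcases ou with _ | u <;> simp only [Adelta] at h <;>
    try exact h.elim
  exact ⟨z, y, rfl, h.2.2⟩

/-- Reachability from a `some` state yields containment in a fold of steps. -/
lemma rtg_some (S : Sys X U Y) {z : Set X} {b : Option (Set X)}
    (h : Relation.ReflTransGen (AR S) (some z) b) :
    ∃ s l, b = some s ∧ s ⊆ foldSteps S z l := by
  induction h with
  | refl => exact ⟨z, [], rfl, subset_rfl⟩
  | tail _ hedge ih =>
    obtain ⟨s, l, rfl, hsub⟩ := ih
    obtain ⟨z', u, y, rfl, hz'⟩ := ar_from_some hedge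
    refine ⟨z', l ++ [(u, y)], rfl, ?_⟩
    rw [foldSteps_append]
    exact hz'.trans (obsStep_mono S hsub u y)

/-- Reachability from `none` yields containment in some `ReachIO`. -/
lemma rtg_none (S : Sys X U Y) {b : Option (Set X)}
    (h : Relation.ReflTransGen (AR S) none b) :
    b = none ∨ ∃ s y0 l, b = some s ∧ s ⊆ ReachIO S y0 l := by
  induction h with
  | refl => exact Or.inl rfl
  | tail _ hedge ih =>
    rcases ih with rfl | ⟨s, y0, l, rfl, hsub⟩
    · obtain ⟨z, y, rfl, hz⟩ := ar_from_none hedge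
      exact Or.inr ⟨z, y, [], rfl, hz⟩
    · obtain ⟨z', u, y, rfl, hz'⟩ := ar_from_some hedge
      refine Or.inr ⟨z', y0, l ++ [(u, y)], rfl, ?_⟩
      rw [reachIO_append]
      exact hz'.trans (obsStep_mono S hsub u y)

/-- Pumping a cycle. -/
lemma cycle_pump (S : Sys X U Y) {z : Set X} {lc : List (U × Y)} (hne : lc ≠ [])
    (hsub : z ⊆ foldSteps S z lc) :
    ∀ n, ∃ l : List (U × Y), n ≤ l.length ∧ z ⊆ foldSteps S z l := by
  intro n
  induction n with
  | zero => exact ⟨[], Nat.zero_le _, subset_rfl⟩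
  | succ n ih =>
    obtain ⟨l, hlen, hl⟩ := ih
    refine ⟨l ++ lc, ?_, ?_⟩
    · have : 1 ≤ lc.length := List.length_pos_iff.mpr hne
      simp only [List.length_append]; omega
    · rw [foldSteps_append]
      exact hsub.trans (foldSteps_mono S hl lc)

instance finiteOption (α : Type*) [Finite α] : Finite (Option α) :=
  Finite.of_surjective (fun x : Unit ⊕ α => x.elim (fun _ => none) some)
    (by rintro (_ | a)
        · exact ⟨Sum.inl (), rfl⟩
        · exact ⟨Sum.inr a, rfl⟩)

/-- Runs of length `n` in the NFA. -/
def RunN (S : Sys X U Y) : ℕ → Option (Set X) → Option (Set X) → Prop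
  | 0, a, b => a = b
  | n + 1, a, b => ∃ c, RunN S n a c ∧ AR S c b

/-- Any pair of states consistent with an observed history yields a run of the
NFA ending in that pair. -/
lemma pair_run (S : Sys X U Y) (l : List (U × Y)) :
    ∀ (y0 : Y) (a b : X), a ∈ ReachIO S y0 l → b ∈ ReachIO S y0 l →
      RunN S (l.length + 1) none (some {a, b}) := by
  induction l using List.reverseRecOn with
  | nil =>
    intro y0 a b ha hb
    refine ⟨none, rfl, (none, y0), ⟨a, by simp⟩, ⟨a, b, rfl⟩, ?_⟩
    rintro x (rfl | rfl)
    · exact ha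
    · exact hb
  | append_singleton l p ih =>
    intro y0 a b ha hb
    rw [reachIO_append] at ha hb
    obtain ⟨⟨a', ha', htra⟩, hHa⟩ := ha
    obtain ⟨⟨b', hb', htrb⟩, hHb⟩ := hb
    have hrun := ih y0 a' b' ha' hb'
    have hedge : AR S (some {a', b'}) (some {a, b}) := by
      refine ⟨(some p.1, p.2), ⟨a, by simp⟩, ⟨a, b, rfl⟩, ?_⟩
      rintro x (rfl | rfl)
      · exact ⟨⟨a', by simp, htra⟩, hHa⟩
      · exact ⟨⟨b', by simp, htrb⟩, hHb⟩
    have hlen : (l ++ [p]).length + 1 = (l.length + 1) + 1 := by simp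
    rw [hlen]
    exact ⟨some {a', b'}, hrun, hedge⟩

/-- Extract a state-function from a run. -/
lemma runN_fun (S : Sys X U Y) :
    ∀ (n : ℕ) (a b : Option (Set X)), RunN S n a b →
      ∃ f : ℕ → Option (Set X), f 0 = a ∧ f n = b ∧
        ∀ i < n, AR S (f i) (f (i + 1)) := by
  intro n
  induction n with
  | zero =>
    intro a b h
    exact ⟨fun _ => a, rfl, h, by intro i hi; omega⟩
  | succ n ih =>
    rintro a b ⟨c, hrun, hedge⟩
    obtain ⟨f, hf0, hfn, hstep⟩ := ih a c hrun
    refine ⟨fun i => if i = n + 1 then b else f i, by simp [hf0], by simp, ?_⟩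
    intro i hi
    rcases Nat.lt_succ_iff_lt_or_eq.mp hi with h | rfl
    · have h1 : i ≠ n + 1 := by omega
      have h2 : i + 1 ≠ n + 1 := by omega
      simpa [h1, h2, show i ≠ n by omega] using hstep i h
    · have h1 : i ≠ i + 1 := by omega
      simpa [h1, hfn] using hedge

/-- Segments of a stepping function are reflexive-transitive reachable. -/
lemma seg_rtg {S : Sys X U Y} {f : ℕ → Option (Set X)} {n : ℕ}
    (hstep : ∀ i < n, AR S (f i) (f (i + 1))) :
    ∀ j, j ≤ n → ∀ i, i ≤ j → Relation.ReflTransGen (AR S) (f i) (f j) := by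
  intro j
  induction j with
  | zero =>
    intro _ i hi
    obtain rfl : i = 0 := by omega
    exact Relation.ReflTransGen.refl
  | succ j ihj =>
    intro hjn i hij
    rcases eq_or_lt_of_le hij with rfl | h
    · exact Relation.ReflTransGen.refl
    · exact (ihj (by omega) i (by omega)).tail (hstep j (by omega))

lemma mem_LP_of_repeat {S : Sys X U Y} {f : ℕ → Option (Set X)} {n i j : ℕ}
    (hij : i < j) (hjn : j ≤ n)
    (hstep : ∀ k < n, AR S (f k) (f (k + 1))) (h0 : f 0 = none) (heq : f i = f j) :
    f n ∈ LP S := by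
  refine ⟨f i, ?_, ?_, ?_⟩
  · rw [← h0]; exact seg_rtg hstep i (by omega) 0 (by omega)
  · refine Relation.TransGen.head' (hstep i (by omega)) ?_
    rw [heq]
    exact seg_rtg hstep j hjn (i + 1) (by omega)
  · exact seg_rtg hstep n le_rfl i (by omega)

end DetectAux


/-- A finite system with all states initial is detectable iff every state of its
knowledge NFA reachable from some cycle is a singleton subset of the state set. -/
theorem detectable_iff_nfa {X U Y : Type} [Finite X] [Finite U] [Finite Y]
    (S : Sys X U Y) (hinit : S.init = Set.univ) :
    Detectable S ↔ ∀ s : Set X, some s ∈ LP S → ∃ a, s = {a} := by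
  constructor
  · rintro ⟨N, hN⟩ s hs
    obtain ⟨c, h1, h2, h3⟩ := hs
    -- the cycle state has the form `some zc`
    obtain ⟨b0, hb0, hedge0⟩ := Relation.TransGen.tail'_iff.mp h2
    obtain ⟨zc, rfl, -, -⟩ := ar_target hedge0
    -- prefix from `none`
    rcases rtg_none S h1 with h | ⟨s0, y0, lp, heq, hp⟩
    · exact absurd h (by simp)
    rw [Option.some_inj] at heq
    subst heq
    -- the cycle yields a nonempty label list `lc` pumping `zc`
    obtain ⟨b1, hb1, hedge1⟩ := Relation.TransGen.tail'_iff.mp h2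
    obtain ⟨sb, lmid, rfl, hmid⟩ := rtg_some S hb1
    obtain ⟨z', u, y, hz'eq, hz'⟩ := ar_from_some hedge1
    rw [Option.some_inj] at hz'eq
    subst hz'eq
    have hcyc : zc ⊆ foldSteps S zc (lmid ++ [(u, y)]) := by
      rw [foldSteps_append]
      exact hz'.trans (obsStep_mono S hmid u y)
    -- suffix to `s`
    obtain ⟨s', ls, hseq, hsuf⟩ := rtg_some S h3
    rw [Option.some_inj] at hseq
    subst hseq
    -- `s` is a pair
    have hall : Relation.ReflTransGen (AR S) none (some s) :=
      (h1.trans h2.to_reflTransGen).trans h3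
    rcases hall.cases_tail with h | ⟨b2, -, hedge2⟩
    · exact absurd h (by simp)
    obtain ⟨z2, hz2, -, c0, d0, hpair⟩ := ar_target hedge2
    rw [Option.some_inj] at hz2
    subst hz2
    subst hpair
    by_cases hcd : c0 = d0
    · exact ⟨d0, by rw [hcd]; exact Set.pair_eq_singleton d0⟩
    · exfalso
      obtain ⟨lN, hlenN, hpump⟩ := cycle_pump S (by simp) hcyc N
      have hsub : ({c0, d0} : Set X) ⊆ ReachIO S y0 (lp ++ (lN ++ ls)) := by
        rw [reachIO_eq, foldSteps_append, foldSteps_append]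
        calc ({c0, d0} : Set X) ⊆ foldSteps S zc ls := hsuf
          _ ⊆ foldSteps S (foldSteps S zc lN) ls := foldSteps_mono S hpump ls
          _ ⊆ _ :=
            foldSteps_mono S (foldSteps_mono S (by exact hp) lN) ls
      have hlen : N ≤ (lp ++ (lN ++ ls)).length := by
        simp only [List.length_append]; omega
      exact hcd (hN y0 _ hlen (hsub (by simp)) (hsub (by simp)))
  · intro hLP
    refine ⟨Nat.card (Option (Set X)), ?_⟩
    intro y0 l hlen a ha b hb
    obtain ⟨f, hf0, hfn, hstep⟩ := runN_fun S _ _ _ (pair_run S l y0 a b ha hb)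
    set n := l.length + 1 with hn
    have hninj : ¬ Function.Injective (fun i : Fin (n + 1) => f i) := by
      intro hinj
      have hle := Nat.card_le_card_of_injective _ hinj
      have hcard : Nat.card (Fin (n + 1)) = n + 1 := by simp
      rw [hcard] at hle
      omega
    obtain ⟨i, j, hfij, hij⟩ := Function.not_injective_iff.mp hninj
    have hvij : i.val ≠ j.val := fun h => hij (Fin.ext h)
    have hin : i.val ≤ n := Nat.lt_succ_iff.mp i.isLt
    have hjn : j.val ≤ n := Nat.lt_succ_iff.mp j.isLt
    have hmem : f n ∈ LP S := by
      rcases Nat.lt_or_ge i.val j.val with h | h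
      · exact mem_LP_of_repeat (i := i.val) (j := j.val) h hjn hstep hf0 hfij
      · exact mem_LP_of_repeat (i := j.val) (j := i.val) (by omega) hin hstep hf0 hfij.symm
    rw [hfn] at hmem
    obtain ⟨x, hx⟩ := hLP _ hmem
    have ha' : a ∈ ({x} : Set X) := hx ▸ (by simp : a ∈ ({a, b} : Set X))
    have hb' : b ∈ ({x} : Set X) := hx ▸ (by simp : b ∈ ({a, b} : Set X))
    rw [Set.mem_singleton_iff] at ha' hb'
    rw [ha', hb']
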